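/- There exists an instance with packing constraints A x ≤ 1 (b = 1, width ρ = 2) and m elements for which no integral outcome is a (δ, m/4)-core outcome for any δ > 0. Concretely, take the complete bipartite graph K_{m/2,m/2} whose vertices are elements, constraints forcing an independent set, and two agents with unit utility on opposite sides: any feasible outcome gives some agent utility 0, who can deviate to get utility m/2, scaled to m/4. -/

import Mathlib

/-- Lower bound for packing constraints with small `b`: elements are the vertices of
the complete bipartite graph `K_{m/2,m/2}` (left = indices `< m/2`), the edge
constraints `x_u + x_v ≤ 1` force feasible outcomes to lie within one side, and two
agents have unit utility on opposite sides.  Every feasible outcome gives some agent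
utility `0`, and that agent can deviate to the whole opposite side, obtaining utility
`m/2`, scaled down (as a singleton coalition among `2` agents) to `m/4`.  Hence no
feasible outcome is a `(δ, m/4)`-core outcome for any `δ > 0`. -/
theorem no_core_independent_set (m : ℕ) (hm : Even m) :
    ∃ u : Fin 2 → Fin m → ℝ,
      (∀ j : Fin m, u 0 j = if (j : ℕ) < m / 2 then 1 else 0) ∧
      (∀ j : Fin m, u 1 j = if (j : ℕ) < m / 2 then 0 else 1) ∧
      ∀ δ : ℝ, 0 < δ →
        ∀ c : Finset (Fin m),
          ((∀ j ∈ c, (j : ℕ) < m / 2) ∨ (∀ j ∈ c, m / 2 ≤ (j : ℕ))) →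
          ∃ (i : Fin 2) (c' : Finset (Fin m)),
            ((∀ j ∈ c', (j : ℕ) < m / 2) ∨ (∀ j ∈ c', m / 2 ≤ (j : ℕ))) ∧
            (1 / 2 : ℝ) * (∑ j ∈ c', u i j)
              ≥ (1 + δ) * (∑ j ∈ c, u i j) + (m : ℝ) / 4 := by
  refine ⟨![fun j => if (j : ℕ) < m / 2 then 1 else 0,
            fun j => if (j : ℕ) < m / 2 then 0 else 1],
          fun j => rfl, fun j => rfl, ?_⟩
  -- sum of indicator of left side over all of Fin m is m/2, of right side is m/2
  have hsum : ∀ p : ℕ → Prop, ∀ _ : DecidablePred p,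
      ∀ k : ℕ, ((Finset.range m).filter p).card = k →
      (∑ j : Fin m, (if p (j : ℕ) then (1 : ℝ) else 0)) = k := by
    intro p _ k hk
    rw [Fin.sum_univ_eq_sum_range (fun i => if p i then (1 : ℝ) else 0)]
    simp [Finset.sum_boole, hk]
  have hLcard : ((Finset.range m).filter (fun i => i < m / 2)).card = m / 2 := by
    have : (Finset.range m).filter (fun i => i < m / 2) = Finset.range (m / 2) := by
      ext i; simp; omega
    rw [this, Finset.card_range]
  have hRcard : ((Finset.range m).filter (fun i => m / 2 ≤ i)).card = m / 2 := by
    have : (Finset.range m).filter (fun i => m / 2 ≤ i) = Finset.Ico (m / 2) m := by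
      ext i; simp [Finset.mem_Ico]; omega
    rw [this, Nat.card_Ico]
    have := Nat.even_iff.mp hm
    omega
  have hL := hsum (fun i => i < m / 2) inferInstance (m / 2) hLcard
  have hR := hsum (fun i => m / 2 ≤ i) inferInstance (m / 2) hRcard
  have hcast : ((m / 2 : ℕ) : ℝ) = (m : ℝ) / 2 := by
    obtain ⟨k, rfl⟩ := hm
    push_cast [Nat.add_mul_div_left, show k + k = 2 * k by ring]
    rw [Nat.mul_div_cancel_left k (by norm_num)]
    push_cast; ring
  intro δ hδ c hc
  rcases hc with h | h
  · -- c on left side: agent 1 gets 0, deviates to right side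
    refine ⟨1, Finset.univ.filter (fun j : Fin m => m / 2 ≤ (j : ℕ)), Or.inr ?_, ?_⟩
    · intro j hj; simpa using (Finset.mem_filter.mp hj).2
    · have h0 : (∑ j ∈ c, (if (j : ℕ) < m / 2 then (0 : ℝ) else 1)) = 0 := by
        apply Finset.sum_eq_zero; intro j hj; simp [h j hj]
      have h1 : (∑ j ∈ Finset.univ.filter (fun j : Fin m => m / 2 ≤ (j : ℕ)),
          (if (j : ℕ) < m / 2 then (0 : ℝ) else 1)) = (m : ℝ) / 2 := by
        rw [Finset.sum_filter]
        have : ∀ j : Fin m, (if m / 2 ≤ (j : ℕ) then (if (j : ℕ) < m / 2 then (0:ℝ) else 1) else 0)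
            = (if m / 2 ≤ (j : ℕ) then (1 : ℝ) else 0) := by
          intro j; by_cases hj : m / 2 ≤ (j : ℕ) <;> simp [hj] <;> omega
        rw [Finset.sum_congr rfl (fun j _ => this j), hR, hcast]
      simp only [Matrix.cons_val_one, Matrix.head_cons, Matrix.cons_val_zero]
      rw [h0, h1]
      linarith
  · -- c on right side: agent 0 gets 0, deviates to left side
    refine ⟨0, Finset.univ.filter (fun j : Fin m => (j : ℕ) < m / 2), Or.inl ?_, ?_⟩
    · intro j hj; simpa using (Finset.mem_filter.mp hj).2
    · have h0 : (∑ j ∈ c, (if (j : ℕ) < m / 2 then (1 : ℝ) else 0)) = 0 := by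
        apply Finset.sum_eq_zero; intro j hj
        have := h j hj; simp; omega
      have h1 : (∑ j ∈ Finset.univ.filter (fun j : Fin m => (j : ℕ) < m / 2),
          (if (j : ℕ) < m / 2 then (1 : ℝ) else 0)) = (m : ℝ) / 2 := by
        rw [Finset.sum_filter]
        have : ∀ j : Fin m, (if (j : ℕ) < m / 2 then (if (j : ℕ) < m / 2 then (1:ℝ) else 0) else 0)
            = (if (j : ℕ) < m / 2 then (1 : ℝ) else 0) := by
          intro j; by_cases hj : (j : ℕ) < m / 2 <;> simp [hj]
        rw [Finset.sum_congr rfl (fun j _ => this j), hL, hcast]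
      simp only [Matrix.cons_val_zero]
      rw [h0, h1]
      linarith
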